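/- (Gibbs variational principle: the Gibbs posterior is the optimal valid belief update.) Let π₀ be a probability measure on a measurable space Ω, l : Ω → ℝ measurable with Z := ∫ exp(−l) dπ₀ ∈ (0,∞), and let p* be the probability measure with density exp(−l)/Z with respect to π₀. Then for every probability measure ν absolutely continuous with respect to π₀ such that l is ν-integrable and KL(ν‖π₀) < ∞, one has ∫ l dν + KL(ν‖π₀) ≥ −log Z, with equality if and only if ν = p*. In particular p* is the unique minimiser of the loss L(ν) := ∫ l dν + KL(ν‖π₀) over such ν. -/

import Mathlib

open MeasureTheory Real

/-- Gibbs variational principle: for every probability measure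
`ν ≪ π₀` with `l` ν-integrable and finite KL divergence,
`∫ l dν + KL(ν‖π₀) ≥ −log Z`, with equality iff `ν = p*`, where `p*` is the
Gibbs posterior with density `exp(−l)/Z` w.r.t. `π₀` and `Z = ∫ exp(−l) dπ₀`.
In particular `p*` is the unique minimiser of `ν ↦ ∫ l dν + KL(ν‖π₀)`. -/
lemma kl_nonneg_aux {Ω : Type*} [MeasurableSpace Ω] (μ ν : Measure Ω)
    [IsProbabilityMeasure μ] [IsProbabilityMeasure ν] (h : μ ≪ ν)
    (hint : Integrable (llr μ ν) μ) :
    0 ≤ ∫ x, llr μ ν x ∂μ ∧ (∫ x, llr μ ν x ∂μ = 0 → μ = ν) := by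
  set g : Ω → ℝ := fun x => (μ.rnDeriv ν x).toReal with hg
  have hg_meas : Measurable g := (Measure.measurable_rnDeriv μ ν).ennreal_toReal
  have hg_pos : ∀ᵐ x ∂μ, 0 < g x := by
    filter_upwards [Measure.rnDeriv_pos h, h.ae_le (Measure.rnDeriv_lt_top μ ν)] with x h1 h2
    exact ENNReal.toReal_pos h1.ne' h2.ne
  -- integrability of g⁻¹
  have hlint : ∫⁻ x, ENNReal.ofReal ((g x)⁻¹) ∂μ ≤ 1 := by
    conv_lhs => rw [← Measure.withDensity_rnDeriv_eq μ ν h]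
    rw [lintegral_withDensity_eq_lintegral_mul ν (Measure.measurable_rnDeriv μ ν)
      (g := fun x => ENNReal.ofReal ((g x)⁻¹)) hg_meas.inv.ennreal_ofReal]
    calc ∫⁻ x, (μ.rnDeriv ν * fun x => ENNReal.ofReal ((g x)⁻¹)) x ∂ν
        ≤ ∫⁻ _, 1 ∂ν := by
          refine lintegral_mono_ae ?_
          filter_upwards [Measure.rnDeriv_lt_top μ ν] with x hx
          simp only [Pi.mul_apply]
          rcases eq_or_ne (μ.rnDeriv ν x) 0 with h0 | h0
          · simp [h0]
          · have hpos : 0 < g x := ENNReal.toReal_pos h0 hx.ne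
            rw [hg, ENNReal.ofReal_inv_of_pos hpos, ENNReal.ofReal_toReal hx.ne,
              ENNReal.mul_inv_cancel h0 hx.ne]
      _ = 1 := by simp
  have hinv_int : Integrable (fun x => (g x)⁻¹) μ := by
    refine ⟨hg_meas.inv.aestronglyMeasurable, ?_⟩
    rw [hasFiniteIntegral_iff_ofReal (Filter.Eventually.of_forall fun x => by positivity)]
    exact lt_of_le_of_lt hlint ENNReal.one_lt_top
  have hinv_le : ∫ x, (g x)⁻¹ ∂μ ≤ 1 := by
    rw [integral_eq_lintegral_of_nonneg_ae (f := fun x => (g x)⁻¹) (Filter.Eventually.of_forall fun x => by positivity)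
      hg_meas.inv.aestronglyMeasurable]
    exact ENNReal.toReal_le_of_le_ofReal one_pos.le (by simpa using hlint)
  have hpt : ∀ᵐ x ∂μ, -llr μ ν x ≤ (g x)⁻¹ - 1 := by
    filter_upwards [hg_pos] with x hx
    have := Real.log_le_sub_one_of_pos (inv_pos.2 hx)
    rw [Real.log_inv] at this
    simpa [llr] using this
  have hsub_int : Integrable (fun x => (g x)⁻¹ - 1) μ := hinv_int.sub (integrable_const 1)
  have key : -∫ x, llr μ ν x ∂μ ≤ ∫ x, (g x)⁻¹ - 1 ∂μ := by
    rw [← integral_neg]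
    exact integral_mono_ae hint.neg hsub_int hpt
  have hsub_le : ∫ x, (g x)⁻¹ - 1 ∂μ ≤ 0 := by
    rw [integral_sub hinv_int (integrable_const 1)]
    simp only [integral_const, measure_univ, probReal_univ, ENNReal.toReal_one, smul_eq_mul, one_mul]
    linarith
  constructor
  · linarith
  · intro hz
    -- φ := g⁻¹ - 1 + llr ≥ 0 with integral ≤ 0
    have hφ_int : Integrable (fun x => (g x)⁻¹ - 1 + llr μ ν x) μ := hsub_int.add hint
    have hφ_nonneg : 0 ≤ᵐ[μ] fun x => (g x)⁻¹ - 1 + llr μ ν x := by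
      filter_upwards [hpt] with x hx; simp only [Pi.zero_apply]; linarith
    have hφ_zero : ∫ x, ((g x)⁻¹ - 1 + llr μ ν x) ∂μ = 0 := by
      have h1 : ∫ x, ((g x)⁻¹ - 1 + llr μ ν x) ∂μ = ∫ x, ((g x)⁻¹ - 1) ∂μ := by
        rw [integral_add hsub_int hint, hz, add_zero]
      have h2 : 0 ≤ ∫ x, ((g x)⁻¹ - 1 + llr μ ν x) ∂μ := integral_nonneg_of_ae hφ_nonneg
      linarith [h1 ▸ hsub_le, h2]
    have hae : ∀ᵐ x ∂μ, (g x)⁻¹ - 1 + llr μ ν x = 0 :=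
      (integral_eq_zero_iff_of_nonneg_ae hφ_nonneg hφ_int).mp hφ_zero
    have hone : ∀ᵐ x ∂μ, μ.rnDeriv ν x = 1 := by
      filter_upwards [hae, hg_pos, h.ae_le (Measure.rnDeriv_lt_top μ ν)] with x hx hxpos hxlt
      have hgx : g x = 1 := by
        by_contra hne
        have hinv_ne : (g x)⁻¹ ≠ 1 := fun hh => hne (by
          field_simp at hh; simpa using hh.symm)
        have := Real.log_lt_sub_one_of_pos (inv_pos.2 hxpos) hinv_ne
        rw [Real.log_inv] at this
        simp only [llr] at hx
        nlinarith [hx, this]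
      exact (ENNReal.toReal_eq_one_iff _).mp hgx
    -- now conclude μ = ν
    set s : Set Ω := {x | μ.rnDeriv ν x ≠ 1} with hs_def
    have hs : MeasurableSet s := (Measure.measurable_rnDeriv μ ν (measurableSet_singleton 1)).compl
    have hμs : μ s = 0 := by
      rw [ae_iff] at hone
      exact hone
    have hμ_eq : μ = ν.withDensity (μ.rnDeriv ν) := (Measure.withDensity_rnDeriv_eq μ ν h).symm
    have hint_s : ∫⁻ x in s, μ.rnDeriv ν x ∂ν = 0 := by
      rw [hμ_eq] at hμs
      rwa [withDensity_apply _ hs] at hμs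
    have huniv : (1 : ENNReal) = ν sᶜ := by
      have h0 : ∫⁻ x, μ.rnDeriv ν x ∂ν = μ Set.univ := Measure.lintegral_rnDeriv h
      rw [measure_univ] at h0
      rw [← h0, ← lintegral_add_compl _ hs, hint_s, zero_add]
      rw [setLIntegral_congr_fun_ae hs.compl (Filter.Eventually.of_forall fun x hx => by
        simpa [hs_def] using not_not.mp hx)]
      simp
    have hνs : ν s = 0 := by
      have h2 : ν s + ν sᶜ = 1 := by rw [measure_add_measure_compl hs, measure_univ]
      rw [← huniv] at h2
      have h3 := congrArg ENNReal.toReal h2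
      rw [ENNReal.toReal_add (measure_ne_top _ _) (by simp)] at h3
      simp only [ENNReal.toReal_one] at h3
      have h4 : (ν s).toReal = 0 := by linarith
      rcases (ENNReal.toReal_eq_zero_iff _).mp h4 with h5 | h5
      · exact h5
      · exact absurd h5 (measure_ne_top _ _)
    have hone' : μ.rnDeriv ν =ᵐ[ν] 1 := by
      rw [Filter.EventuallyEq, ae_iff]
      simpa only [Pi.one_apply] using hνs
    rw [hμ_eq, withDensity_congr_ae hone', withDensity_one]

theorem gibbs_posterior_is_optimal_valid_belief_update
    {Ω : Type*} [MeasurableSpace Ω] (π₀ : Measure Ω) [IsProbabilityMeasure π₀]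
    (l : Ω → ℝ) (hl : Measurable l)
    -- Z := ∫ exp(−l) dπ₀ ∈ (0,∞)
    (hZint : Integrable (fun x => Real.exp (-l x)) π₀)
    (hZpos : 0 < ∫ x, Real.exp (-l x) ∂π₀)
    -- p* has density exp(−l)/Z with respect to π₀
    (pstar : Measure Ω)
    (hpstar : pstar = π₀.withDensity
      (fun x => ENNReal.ofReal (Real.exp (-l x) / ∫ y, Real.exp (-l y) ∂π₀))) :
    ∀ ν : Measure Ω, IsProbabilityMeasure ν → ν ≪ π₀ →
      Integrable l ν →
      -- KL(ν‖π₀) = ∫ log(dν/dπ₀) dν is finite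
      Integrable (fun x => Real.log ((ν.rnDeriv π₀ x).toReal)) ν →
      ((∫ x, l x ∂ν + ∫ x, Real.log ((ν.rnDeriv π₀ x).toReal) ∂ν
          ≥ - Real.log (∫ x, Real.exp (-l x) ∂π₀))
        ∧ ((∫ x, l x ∂ν + ∫ x, Real.log ((ν.rnDeriv π₀ x).toReal) ∂ν
          = - Real.log (∫ x, Real.exp (-l x) ∂π₀)) ↔ ν = pstar)) := by
  intro ν hν hac hl_int hllr_int'
  have hps : pstar = π₀.tilted (fun x => -l x) := by
    rw [hpstar]; rfl
  have hllr_int : Integrable (llr ν π₀) ν := hllr_int'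
  haveI : IsProbabilityMeasure pstar := by
    rw [hps]; exact isProbabilityMeasure_tilted hZint
  have hac2 : ν ≪ pstar := by
    rw [hps]; exact hac.trans (absolutelyContinuous_tilted hZint)
  have hint2 : Integrable (llr ν pstar) ν := by
    rw [hps]; exact integrable_llr_tilted_right hac hl_int.neg hllr_int hZint
  have hform : ∫ x, llr ν pstar x ∂ν
      = ∫ x, llr ν π₀ x ∂ν - ∫ x, (-l x) ∂ν + Real.log (∫ x, Real.exp (-l x) ∂π₀) := by
    rw [hps]; exact integral_llr_tilted_right hac hl_int.neg hZint hllr_int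
  rw [integral_neg] at hform
  obtain ⟨hnn, heq⟩ := kl_nonneg_aux ν pstar hac2 hint2
  have hgoal : (fun x => Real.log ((ν.rnDeriv π₀ x).toReal)) = llr ν π₀ := rfl
  rw [hgoal]
  refine ⟨by linarith, ?_, ?_⟩
  · intro h
    exact heq (by linarith)
  · intro hv
    have hzero : ∫ x, llr ν pstar x ∂ν = 0 := by
      rw [hv]
      have h0 : llr pstar pstar =ᵐ[pstar] 0 := by
        filter_upwards [Measure.rnDeriv_self pstar] with x hx
        simp [llr, hx]
      rw [integral_congr_ae h0]; simp
    linarith
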